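/- Let G be a group with a finite generating set 𝒢, and suppose: (i) there is a constant K ≥ 1 such that whenever φ, φ' ∈ G are conjugate there exists a conjugating element η ∈ G with η φ' η⁻¹ = φ and ‖η‖_𝒢 ≤ K(‖φ‖_𝒢 + ‖φ'‖_𝒢); (ii) there is a finite subset F ⊆ G such that every element of G of finite order is conjugate to some element of F; (iii) for every ξ ∈ F the centralizer C(ξ) = {ψ ∈ G : ψξ = ξψ} is finitely generated. Then there exists a constant M₀ > 0 such that for every element φ ∈ G of finite order, the centralizer C(φ) is generated by the set {ψ ∈ C(φ) : ‖ψ‖_𝒢 ≤ M₀·(‖φ‖_𝒢 + 1)}. -/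

import Mathlib

/-- The word length of `g` with respect to a generating set `S`:
the least `n` such that `g` is a product of `n` elements of `S ∪ S⁻¹`. -/
noncomputable def wordLength {G : Type*} [Group G] (S : Set G) (g : G) : ℕ :=
  sInf {n : ℕ | ∃ l : List G, l.length = n ∧ (∀ x ∈ l, x ∈ S ∨ x⁻¹ ∈ S) ∧ l.prod = g}

lemma wordLength_le {G : Type*} [Group G] {S : Set G} {g : G} {l : List G}
    (hl : ∀ x ∈ l, x ∈ S ∨ x⁻¹ ∈ S) (hp : l.prod = g) :
    wordLength S g ≤ l.length :=
  Nat.sInf_le ⟨l, rfl, hl, hp⟩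

lemma exists_rep {G : Type*} [Group G] {S : Set G} (hgen : Subgroup.closure S = ⊤) (g : G) :
    ∃ l : List G, l.length = wordLength S g ∧ (∀ x ∈ l, x ∈ S ∨ x⁻¹ ∈ S) ∧ l.prod = g := by
  have hg : g ∈ Submonoid.closure (S ∪ S⁻¹) := by
    rw [← Subgroup.closure_toSubmonoid, hgen]; trivial
  obtain ⟨l, hl, hp⟩ := Submonoid.exists_list_of_mem_closure hg
  have hl' : ∀ x ∈ l, x ∈ S ∨ x⁻¹ ∈ S := by
    intro x hx
    rcases hl x hx with h | h
    · exact Or.inl h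
    · exact Or.inr (by rwa [Set.mem_inv] at h)
  have hne : {n : ℕ | ∃ l : List G, l.length = n ∧ (∀ x ∈ l, x ∈ S ∨ x⁻¹ ∈ S) ∧ l.prod = g}.Nonempty :=
    ⟨l.length, l, rfl, hl', hp⟩
  obtain ⟨l', h1, h2, h3⟩ := Nat.sInf_mem hne
  exact ⟨l', h1, h2, h3⟩

lemma wordLength_mul_le {G : Type*} [Group G] {S : Set G} (hgen : Subgroup.closure S = ⊤)
    (a b : G) : wordLength S (a * b) ≤ wordLength S a + wordLength S b := by
  obtain ⟨la, hla, ha, hpa⟩ := exists_rep hgen a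
  obtain ⟨lb, hlb, hb, hpb⟩ := exists_rep hgen b
  have := wordLength_le (g := a * b) (l := la ++ lb)
    (by intro x hx; rcases List.mem_append.1 hx with h | h; exacts [ha x h, hb x h])
    (by rw [List.prod_append, hpa, hpb])
  simpa [hla, hlb] using this

lemma wordLength_inv_le {G : Type*} [Group G] {S : Set G} (hgen : Subgroup.closure S = ⊤)
    (a : G) : wordLength S a⁻¹ ≤ wordLength S a := by
  obtain ⟨la, hla, ha, hpa⟩ := exists_rep hgen a
  have := wordLength_le (g := a⁻¹) (l := (la.map fun x => x⁻¹).reverse)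
    (by
      intro x hx
      simp only [List.mem_reverse, List.mem_map] at hx
      obtain ⟨y, hy, rfl⟩ := hx
      rcases ha y hy with h | h
      · exact Or.inr (by simpa using h)
      · exact Or.inl h)
    (by rw [← List.prod_inv_reverse, hpa])
  simpa [hla] using this

lemma conj_comm_of_comm {G : Type*} [Group G] {a b : G} (c : G) (h : a * b = b * a) :
    (c * a * c⁻¹) * (c * b * c⁻¹) = (c * b * c⁻¹) * (c * a * c⁻¹) := by
  calc (c * a * c⁻¹) * (c * b * c⁻¹) = c * (a * b) * c⁻¹ := by group
    _ = c * (b * a) * c⁻¹ := by rw [h]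
    _ = (c * b * c⁻¹) * (c * a * c⁻¹) := by group

theorem finite_order_centralizer_generators
    {G : Type*} [Group G] (𝒢 : Set G) (h𝒢fin : 𝒢.Finite)
    (h𝒢gen : Subgroup.closure 𝒢 = ⊤)
    (K : ℝ) (hK : 1 ≤ K)
    (hTao : ∀ φ φ' : G, IsConj φ φ' → ∃ η : G, η * φ' * η⁻¹ = φ ∧
      (wordLength 𝒢 η : ℝ) ≤ K * ((wordLength 𝒢 φ : ℝ) + (wordLength 𝒢 φ' : ℝ)))
    (F : Set G) (hFfin : F.Finite)
    (hF : ∀ φ : G, IsOfFinOrder φ → ∃ ξ ∈ F, IsConj φ ξ)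
    (hC : ∀ ξ ∈ F, (Subgroup.centralizer ({ξ} : Set G)).FG) :
    ∃ M₀ : ℝ, 0 < M₀ ∧ ∀ φ : G, IsOfFinOrder φ →
      Subgroup.closure
        {ψ : G | ψ * φ = φ * ψ ∧ (wordLength 𝒢 ψ : ℝ) ≤ M₀ * ((wordLength 𝒢 φ : ℝ) + 1)}
        = Subgroup.centralizer ({φ} : Set G) := by
  classical
  -- choose finite generating sets for the centralizers of elements of F
  have hT : ∀ ξ : G, ∃ t : Finset G,
      ξ ∈ F → Subgroup.closure (t : Set G) = Subgroup.centralizer ({ξ} : Set G) := by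
    intro ξ
    by_cases h : ξ ∈ F
    · obtain ⟨t, ht⟩ := hC ξ h
      exact ⟨t, fun _ => ht⟩
    · exact ⟨∅, fun h' => absurd h' h⟩
  choose T hT using hT
  -- a uniform bound on word lengths of elements of F and of the chosen generators
  set B : ℕ := hFfin.toFinset.sup
    (fun ξ => max (wordLength 𝒢 ξ) ((T ξ).sup (wordLength 𝒢))) with hB
  have hξB : ∀ ξ ∈ F, wordLength 𝒢 ξ ≤ B := by
    intro ξ hξ
    exact le_trans (le_max_left _ _)
      (Finset.le_sup (f := fun ξ => max (wordLength 𝒢 ξ) ((T ξ).sup (wordLength 𝒢)))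
        (hFfin.mem_toFinset.2 hξ))
  have hsB : ∀ ξ ∈ F, ∀ s ∈ T ξ, wordLength 𝒢 s ≤ B := by
    intro ξ hξ s hs
    exact le_trans (le_trans (Finset.le_sup hs) (le_max_right _ _))
      (Finset.le_sup (f := fun ξ => max (wordLength 𝒢 ξ) ((T ξ).sup (wordLength 𝒢)))
        (hFfin.mem_toFinset.2 hξ))
  refine ⟨2 * K * (B + 1) + B + 1, by positivity, ?_⟩
  intro φ hφ
  obtain ⟨ξ, hξF, hconj⟩ := hF φ hφ
  obtain ⟨η, hη, hηlen⟩ := hTao φ ξ hconj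
  apply le_antisymm
  · refine Subgroup.closure_le _ |>.2 ?_
    rintro ψ ⟨h1, _⟩
    exact Subgroup.mem_centralizer_singleton_iff.2 h1
  · intro ψ hψ
    have hψφ : ψ * φ = φ * ψ := Subgroup.mem_centralizer_singleton_iff.1 hψ
    -- η⁻¹ ψ η centralizes ξ
    have hc : η⁻¹ * ψ * η ∈ Subgroup.centralizer ({ξ} : Set G) := by
      rw [Subgroup.mem_centralizer_singleton_iff]
      have hφ' : ξ = η⁻¹ * φ * η := by rw [← hη]; group
      rw [hφ']
      simpa using conj_comm_of_comm η⁻¹ hψφ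
    rw [← hT ξ hξF] at hc
    have hmap : ψ ∈ (Subgroup.closure ((T ξ : Set G))).map (MulAut.conj η).toMonoidHom := by
      refine ⟨η⁻¹ * ψ * η, hc, ?_⟩
      simp [MulAut.conj_apply]
      group
    rw [MonoidHom.map_closure] at hmap
    refine Subgroup.closure_mono ?_ hmap
    rintro x ⟨s, hs, rfl⟩
    have hsC : s ∈ Subgroup.centralizer ({ξ} : Set G) := by
      rw [← hT ξ hξF]
      exact Subgroup.subset_closure hs
    have hsξ : s * ξ = ξ * s := Subgroup.mem_centralizer_singleton_iff.1 hsC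
    constructor
    · -- η s η⁻¹ commutes with φ
      show (MulAut.conj η) s * φ = φ * (MulAut.conj η) s
      simp only [MulAut.conj_apply]
      rw [← hη]
      exact conj_comm_of_comm η hsξ
    · -- word length bound
      show (wordLength 𝒢 ((MulAut.conj η) s) : ℝ) ≤ _
      have h1 : wordLength 𝒢 ((MulAut.conj η) s) ≤
          wordLength 𝒢 η + wordLength 𝒢 s + wordLength 𝒢 η⁻¹ := by
        calc wordLength 𝒢 (η * s * η⁻¹)
            ≤ wordLength 𝒢 (η * s) + wordLength 𝒢 η⁻¹ := wordLength_mul_le h𝒢gen _ _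
          _ ≤ wordLength 𝒢 η + wordLength 𝒢 s + wordLength 𝒢 η⁻¹ :=
              add_le_add_left (wordLength_mul_le h𝒢gen _ _) _
      have h2 : wordLength 𝒢 η⁻¹ ≤ wordLength 𝒢 η := wordLength_inv_le h𝒢gen η
      have hwξ : (wordLength 𝒢 ξ : ℝ) ≤ B := by exact_mod_cast hξB ξ hξF
      have hws : (wordLength 𝒢 s : ℝ) ≤ B := by exact_mod_cast hsB ξ hξF s hs
      have h1' : (wordLength 𝒢 ((MulAut.conj η) s) : ℝ) ≤
          2 * (wordLength 𝒢 η : ℝ) + wordLength 𝒢 s := by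
        have := le_trans h1 (by omega :
          wordLength 𝒢 η + wordLength 𝒢 s + wordLength 𝒢 η⁻¹ ≤
          2 * wordLength 𝒢 η + wordLength 𝒢 s)
        exact_mod_cast this
      have hwφ : (0 : ℝ) ≤ (wordLength 𝒢 φ : ℝ) := Nat.cast_nonneg _
      have hB0 : (0 : ℝ) ≤ (B : ℝ) := Nat.cast_nonneg _
      calc (wordLength 𝒢 ((MulAut.conj η) s) : ℝ)
          ≤ 2 * (wordLength 𝒢 η : ℝ) + wordLength 𝒢 s := h1'
        _ ≤ 2 * (K * ((wordLength 𝒢 φ : ℝ) + wordLength 𝒢 ξ)) + B := by linarith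
        _ ≤ (2 * K * (B + 1) + B + 1) * ((wordLength 𝒢 φ : ℝ) + 1) := by
            have hK0 : (0:ℝ) ≤ K := by linarith
            nlinarith [mul_nonneg (mul_nonneg hK0 hB0) hwφ,
              mul_nonneg hK0 (sub_nonneg.2 hwξ), mul_nonneg hB0 hwφ]
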